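/- The deterministic platoon coordination game G^d admits at least one pure Nash equilibrium: there exists an action profile w* ∈ W = W^1 × ⋯ × W^N such that for every vehicle i and every w_i ∈ W^i, U^i(w*_i, w*_{-i}, τ) ≥ U^i(w_i, w*_{-i}, τ). -/

import Mathlib

open scoped BigOperators

/-- Departure time of a vehicle from its `(k+1)`-st node (`0`-indexed `k`):
`d 0 = t0 + w 0`, `d (k+1) = d k + tt (path k) (d k) + w (k+1)`. -/
def depart {E : Type*} (tt : E → ℕ → ℕ) (t0 : ℕ) (path : ℕ → E) (w : ℕ → ℕ) : ℕ → ℕ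
  | 0 => t0 + w 0
  | k + 1 => depart tt t0 path w k + tt (path k) (depart tt t0 path w k) + w (k + 1)

/-- The platoon set `C(e,t,w,τ)`: vehicles entering edge `e` at time instance `t`. -/
def platoon {E ι : Type*} (len : ι → ℕ) (path : ι → ℕ → E)
    (tt : E → ℕ → ℕ) (t0 : ι → ℕ) (w : ι → ℕ → ℕ) (e : E) (t : ℕ) : Set ι :=
  {j | ∃ k < len j, path j k = e ∧ depart tt (t0 j) (path j) (w j) k = t}

/-- Vehicle `i`'s utility: total platooning reward along its path minus waiting cost. -/
noncomputable def utility {E ι : Type*} (len : ι → ℕ) (path : ι → ℕ → E)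
    (tt : E → ℕ → ℕ) (t0 : ι → ℕ) (R : ℕ → E → ℝ) (Λ : ι → (ℕ → ℕ) → ℝ)
    (w : ι → ℕ → ℕ) (i : ι) : ℝ :=
  (∑ k ∈ Finset.range (len i),
      R ((platoon len path tt t0 w (path i k)
            (depart tt (t0 i) (path i) (w i) k)).ncard) (path i k))
    - Λ i (w i)

/-- `r(n,e) = ∑_{j=1}^{n} R(j,e)`; in particular `r(0,e) = 0`. -/
noncomputable def rsum {E : Type*} (R : ℕ → E → ℝ) (n : ℕ) (e : E) : ℝ :=
  ∑ j ∈ Finset.Icc 1 n, R j e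

/-- The candidate potential
`Φ(w,τ) = ∑_{t∈ℕ} ∑_{e∈E} r(|C(e,t,w,τ)|,e) - ∑_i Λ_i(wⁱ)`. -/
noncomputable def potential {E ι : Type*} [Fintype E] [Fintype ι]
    (len : ι → ℕ) (path : ι → ℕ → E) (tt : E → ℕ → ℕ) (t0 : ι → ℕ)
    (R : ℕ → E → ℝ) (Λ : ι → (ℕ → ℕ) → ℝ) (w : ι → ℕ → ℕ) : ℝ :=
  (∑' t : ℕ, ∑ e : E, rsum R ((platoon len path tt t0 w e t).ncard) e)
    - ∑ i : ι, Λ i (w i)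

lemma depart_strictMono {E : Type*} (tt : E → ℕ → ℕ) (htt : ∀ e t, 0 < tt e t)
    (t0 : ℕ) (p : ℕ → E) (v : ℕ → ℕ) : StrictMono (depart tt t0 p v) := by
  apply strictMono_nat_of_lt_succ
  intro k
  have := htt (p k) (depart tt t0 p v k)
  simp only [depart]
  omega

open Classical in
lemma rsum_diff {E ι : Type*} [Fintype ι] (R : ℕ → E → ℝ) (e : E) (A : Set ι) (i : ι) :
    rsum R A.ncard e - rsum R (A \ {i}).ncard e
      = if i ∈ A then R A.ncard e else 0 := by
  classical
  by_cases h : i ∈ A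
  · rw [if_pos h]
    have h1 : (A \ {i}).ncard + 1 = A.ncard :=
      Set.ncard_diff_singleton_add_one h (Set.toFinite A)
    rw [← h1]
    unfold rsum
    rw [Finset.sum_Icc_succ_top (Nat.succ_le_succ (Nat.zero_le _))]
    ring
  · rw [if_neg h, Set.diff_singleton_eq_self h]; ring

open Classical in
lemma sum_reward_eq {E ι : Type*} [Fintype E] [Fintype ι]
    (len : ι → ℕ) (path : ι → ℕ → E) (tt : E → ℕ → ℕ) (htt : ∀ e t, 0 < tt e t)
    (t0 : ι → ℕ) (R : ℕ → E → ℝ) (w : ι → ℕ → ℕ) (i : ι) (T : ℕ)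
    (hT : ∀ k < len i, depart tt (t0 i) (path i) (w i) k < T) :
    ∑ t ∈ Finset.range T, ∑ e : E,
      (rsum R ((platoon len path tt t0 w e t).ncard) e
        - rsum R ((platoon len path tt t0 w e t \ {i}).ncard) e)
    = ∑ k ∈ Finset.range (len i),
        R ((platoon len path tt t0 w (path i k)
              (depart tt (t0 i) (path i) (w i) k)).ncard) (path i k) := by
  classical
  set d := depart tt (t0 i) (path i) (w i) with hd
  have hmono : StrictMono d := depart_strictMono tt htt _ _ _
  set F : ℕ × E → ℝ := fun p =>
    if i ∈ platoon len path tt t0 w p.2 p.1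
    then R ((platoon len path tt t0 w p.2 p.1).ncard) p.2 else 0 with hF
  have step1 : ∑ t ∈ Finset.range T, ∑ e : E,
      (rsum R ((platoon len path tt t0 w e t).ncard) e
        - rsum R ((platoon len path tt t0 w e t \ {i}).ncard) e)
      = ∑ p ∈ Finset.range T ×ˢ (Finset.univ : Finset E), F p := by
    rw [Finset.sum_product]
    refine Finset.sum_congr rfl fun t _ => Finset.sum_congr rfl fun e _ => ?_
    exact rsum_diff R e _ i
  set g : ℕ → ℕ × E := fun k => (d k, path i k) with hg
  have hsub : (Finset.range (len i)).image g ⊆ Finset.range T ×ˢ Finset.univ := by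
    intro p hp
    obtain ⟨k, hk, rfl⟩ := Finset.mem_image.mp hp
    simp only [Finset.mem_product, Finset.mem_range, Finset.mem_univ, and_true]
    exact hT k (Finset.mem_range.mp hk)
  have hzero : ∀ p ∈ Finset.range T ×ˢ (Finset.univ : Finset E),
      p ∉ (Finset.range (len i)).image g → F p = 0 := by
    intro p _ hp
    rw [hF]
    simp only
    rw [if_neg]
    intro hmem
    obtain ⟨k, hk, hke, hkt⟩ := hmem
    exact hp (Finset.mem_image.mpr ⟨k, Finset.mem_range.mpr hk, by
      rw [hg]; simp only [Prod.ext_iff]; exact ⟨hkt, hke⟩⟩)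
  have hinj : ∀ x ∈ Finset.range (len i), ∀ y ∈ Finset.range (len i),
      g x = g y → x = y := by
    intro x _ y _ hxy
    exact hmono.injective (congrArg Prod.fst hxy)
  rw [step1, ← Finset.sum_subset hsub hzero, Finset.sum_image hinj]
  refine Finset.sum_congr rfl fun k hk => ?_
  rw [hF]
  simp only
  rw [if_pos ⟨k, Finset.mem_range.mp hk, rfl, rfl⟩]

lemma platoon_diff_indep {E ι : Type*} (len : ι → ℕ) (path : ι → ℕ → E)
    (tt : E → ℕ → ℕ) (t0 : ι → ℕ) (w w' : ι → ℕ → ℕ) (i : ι)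
    (hagree : ∀ j ≠ i, w j = w' j) (e : E) (t : ℕ) :
    platoon len path tt t0 w e t \ {i} = platoon len path tt t0 w' e t \ {i} := by
  ext j
  simp only [Set.mem_diff, Set.mem_singleton_iff, platoon, Set.mem_setOf_eq]
  constructor
  · rintro ⟨h1, h2⟩; exact ⟨by rwa [hagree j h2] at h1, h2⟩
  · rintro ⟨h1, h2⟩; exact ⟨by rwa [hagree j h2], h2⟩

/-- **Theorem 1 (existence of a pure Nash equilibrium).**  The deterministic platoon
coordination game admits at least one pure Nash equilibrium: there is a feasible
profile `w*` such that no vehicle can increase its utility by unilaterally changing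
its waiting times within its action set. -/
theorem deterministic_platoon_game_has_pure_NE
    {E ι : Type*} [Fintype E] [Fintype ι] [DecidableEq ι]
    (len : ι → ℕ) (path : ι → ℕ → E) (tt : E → ℕ → ℕ) (htt : ∀ e t, 0 < tt e t)
    (t0 : ι → ℕ) (R : ℕ → E → ℝ) (Λ : ι → (ℕ → ℕ) → ℝ)
    (W : ι → Finset (ℕ → ℕ)) (hW : ∀ i, (W i).Nonempty) :
    ∃ wstar : ι → ℕ → ℕ, (∀ j, wstar j ∈ W j) ∧
      ∀ i : ι, ∀ wi ∈ W i,
        utility len path tt t0 R Λ wstar i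
          ≥ utility len path tt t0 R Λ (Function.update wstar i wi) i := by
  classical
  set Ω : Finset (ι → ℕ → ℕ) := Fintype.piFinset W with hΩ
  have hΩne : Ω.Nonempty := Fintype.piFinset_nonempty.mpr hW
  set T : ℕ := (Finset.univ.sup fun j => (W j).sup fun v =>
      (Finset.range (len j)).sup fun k => depart tt (t0 j) (path j) v k) + 1 with hTdef
  have hTbound : ∀ w ∈ Ω, ∀ j, ∀ k < len j,
      depart tt (t0 j) (path j) (w j) k < T := by
    intro w hw j k hk
    have h1 : depart tt (t0 j) (path j) (w j) k
        ≤ (Finset.range (len j)).sup fun k => depart tt (t0 j) (path j) (w j) k :=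
      Finset.le_sup (Finset.mem_range.mpr hk)
    have h2 : ((Finset.range (len j)).sup fun k => depart tt (t0 j) (path j) (w j) k)
        ≤ (W j).sup fun v => (Finset.range (len j)).sup fun k => depart tt (t0 j) (path j) v k :=
      Finset.le_sup (f := fun v => (Finset.range (len j)).sup fun k =>
        depart tt (t0 j) (path j) v k) (Fintype.mem_piFinset.mp hw j)
    have h3 : ((W j).sup fun v => (Finset.range (len j)).sup fun k =>
          depart tt (t0 j) (path j) v k)
        ≤ Finset.univ.sup fun j => (W j).sup fun v =>
          (Finset.range (len j)).sup fun k => depart tt (t0 j) (path j) v k :=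
      Finset.le_sup (f := fun j => (W j).sup fun v =>
        (Finset.range (len j)).sup fun k => depart tt (t0 j) (path j) v k)
        (Finset.mem_univ j)
    omega
  set Φ : (ι → ℕ → ℕ) → ℝ := fun w =>
    (∑ t ∈ Finset.range T, ∑ e : E, rsum R ((platoon len path tt t0 w e t).ncard) e)
      - ∑ j, Λ j (w j) with hΦ
  obtain ⟨wstar, hmem, hmax⟩ := Finset.exists_max_image Ω Φ hΩne
  refine ⟨wstar, fun j => Fintype.mem_piFinset.mp hmem j, ?_⟩
  intro i wi hwi
  set w' : ι → ℕ → ℕ := Function.update wstar i wi with hw'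
  have hw'Ω : w' ∈ Ω := Fintype.mem_piFinset.mpr fun j => by
    by_cases h : j = i
    · subst h; simpa [hw'] using hwi
    · rw [hw', Function.update_of_ne h]; exact Fintype.mem_piFinset.mp hmem j
  have hagree : ∀ j ≠ i, wstar j = w' j := fun j hj =>
    (Function.update_of_ne hj _ _).symm
  -- potential difference equals utility difference
  have hA : ∀ w : ι → ℕ → ℕ, w ∈ Ω →
      (∑ t ∈ Finset.range T, ∑ e : E, rsum R ((platoon len path tt t0 w e t).ncard) e)
        - (∑ t ∈ Finset.range T, ∑ e : E,
            rsum R ((platoon len path tt t0 w e t \ {i}).ncard) e)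
      = ∑ k ∈ Finset.range (len i),
          R ((platoon len path tt t0 w (path i k)
                (depart tt (t0 i) (path i) (w i) k)).ncard) (path i k) := by
    intro w hw
    rw [← sum_reward_eq len path tt htt t0 R w i T (fun k hk => hTbound w hw i k hk)]
    rw [← Finset.sum_sub_distrib]
    exact Finset.sum_congr rfl fun t _ => (Finset.sum_sub_distrib _ _).symm
  have hM : (∑ t ∈ Finset.range T, ∑ e : E,
        rsum R ((platoon len path tt t0 wstar e t \ {i}).ncard) e)
      = ∑ t ∈ Finset.range T, ∑ e : E,
        rsum R ((platoon len path tt t0 w' e t \ {i}).ncard) e := by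
    refine Finset.sum_congr rfl fun t _ => Finset.sum_congr rfl fun e _ => ?_
    rw [platoon_diff_indep len path tt t0 wstar w' i hagree e t]
  have hΛ : (∑ j, Λ j (wstar j)) - (∑ j, Λ j (w' j)) = Λ i (wstar i) - Λ i (w' i) := by
    rw [← Finset.sum_sub_distrib]
    rw [Finset.sum_eq_single i]
    · intro j _ hj; rw [hagree j hj]; ring
    · intro h; exact absurd (Finset.mem_univ i) h
  have hkey : utility len path tt t0 R Λ wstar i - utility len path tt t0 R Λ w' i
      = Φ wstar - Φ w' := by
    have h1 := hA wstar hmem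
    have h2 := hA w' hw'Ω
    unfold utility
    rw [hΦ]
    simp only
    linarith [hM, hΛ]
  have hle : Φ w' ≤ Φ wstar := hmax w' hw'Ω
  rw [ge_iff_le, ← sub_nonneg, hkey]
  linarith
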